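/- Let the outer product ∇f(x)∇f(x)ᵀ be integrated against a probability density p to form C. If C has rank at most n, then ∇f(x) ∈ col(C) for p-almost every x at which ∇f is defined; in particular, if f is a ridge function with matrix A then ∇f(x) ⊥ ker(Aᵀ) pointwise. -/

import Mathlib

open MeasureTheory

lemma aux_mem_range (m : ℕ) (C : Matrix (Fin m) (Fin m) ℝ) (hsym : C.transpose = C)
    (v : Fin m → ℝ) (hv : ∀ u : Fin m → ℝ, C.mulVec u = 0 → ∑ i, v i * u i = 0) :
    v ∈ LinearMap.range C.mulVecLin := by
  set T : EuclideanSpace ℝ (Fin m) →ₗ[ℝ] EuclideanSpace ℝ (Fin m) := Matrix.toEuclideanLin C with hT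
  have hadj : LinearMap.adjoint T = T := by
    have hct : C.conjTranspose = C := by
      ext i j
      rw [Matrix.conjTranspose_apply, star_trivial]
      conv_rhs => rw [← hsym]
      rw [Matrix.transpose_apply]
    rw [hT, ← Matrix.toEuclideanLin_conjTranspose_eq_adjoint, hct]
  -- range T ≤ (ker T)ᗮ
  have hle : LinearMap.range T ≤ (LinearMap.ker T)ᗮ := by
    rintro _ ⟨z, rfl⟩
    intro u hu
    rw [LinearMap.mem_ker] at hu
    rw [show T z = LinearMap.adjoint T z by rw [hadj], LinearMap.adjoint_inner_right, hu,
      inner_zero_left]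
  have heq : LinearMap.range T = (LinearMap.ker T)ᗮ := by
    apply Submodule.eq_of_le_of_finrank_le hle
    have h1 := LinearMap.finrank_range_add_finrank_ker T
    have h2 := Submodule.finrank_add_finrank_orthogonal (LinearMap.ker T)
    omega
  -- v as euclidean vector
  have hvmem : (WithLp.equiv 2 (Fin m → ℝ)).symm v ∈ (LinearMap.ker T)ᗮ := by
    intro u hu
    rw [LinearMap.mem_ker] at hu
    have hu' : C.mulVec (WithLp.equiv 2 (Fin m → ℝ) u) = 0 := by
      have := congrArg (WithLp.equiv 2 (Fin m → ℝ)) hu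
      exact this
    have := hv _ hu'
    rw [real_inner_comm]
    simpa [PiLp.inner_apply, RCLike.inner_apply, WithLp.equiv, mul_comm] using this
  rw [← heq] at hvmem
  obtain ⟨z, hz⟩ := hvmem
  refine ⟨WithLp.equiv 2 (Fin m → ℝ) z, ?_⟩
  have h2 := congrArg (WithLp.equiv 2 (Fin m → ℝ)) hz
  change C.mulVec z.ofLp = v at h2
  rw [Matrix.mulVecLin_apply]
  exact h2

/-- With `C = ∫ ∇f ∇fᵀ dμ` of rank at most `n`, the gradient `∇f(x)` lies in
`col C` for `μ`-almost every `x`; and for a ridge function `f x = g (Aᵀ x)`,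
pointwise `∇f(x) ⊥ ker Aᵀ`. -/
theorem gradient_in_column_space (m n : ℕ) (A : Matrix (Fin m) (Fin n) ℝ)
    (g : EuclideanSpace ℝ (Fin n) → ℝ) (hg : ContDiff ℝ 1 g)
    (f : EuclideanSpace ℝ (Fin m) → ℝ)
    (hf : ∀ x, f x = g (WithLp.toLp 2 (A.transpose.mulVec x : Fin n → ℝ) : EuclideanSpace ℝ (Fin n)))
    (μ : Measure (EuclideanSpace ℝ (Fin m))) [IsProbabilityMeasure μ]
    (hint : ∀ i j : Fin m,
      Integrable (fun x => gradient f x i * gradient f x j) μ)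
    (C : Matrix (Fin m) (Fin m) ℝ)
    (hC : ∀ i j, C i j = ∫ x, gradient f x i * gradient f x j ∂μ)
    (hrank : C.rank ≤ n) :
    (∀ᵐ x ∂μ, (fun i => gradient f x i) ∈ LinearMap.range C.mulVecLin) ∧
    (∀ (x : EuclideanSpace ℝ (Fin m)) (u : Fin m → ℝ),
      A.transpose.mulVec u = 0 → ∑ i, gradient f x i * u i = 0) := by
  have hsym : C.transpose = C := by
    ext i j
    rw [Matrix.transpose_apply, hC, hC]
    simp_rw [mul_comm]
  constructor
  · -- a.e. part
    have claim : ∀ u : Fin m → ℝ, C.mulVec u = 0 →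
        ∀ᵐ x ∂μ, ∑ i, gradient f x i * u i = 0 := by
      intro u hCu
      have hIsum : Integrable
          (fun x => ∑ i, ∑ j, (u i * u j) * (gradient f x i * gradient f x j)) μ :=
        integrable_finset_sum _ fun i _ => integrable_finset_sum _ fun j _ =>
          (hint i j).const_mul (u i * u j)
      have heq : (fun x => (∑ i, gradient f x i * u i) ^ 2)
          = fun x => ∑ i, ∑ j, (u i * u j) * (gradient f x i * gradient f x j) := by
        funext x
        rw [sq, Finset.sum_mul_sum]
        exact Finset.sum_congr rfl fun i _ => Finset.sum_congr rfl fun j _ => by ring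
      have hint' : Integrable (fun x => (∑ i, gradient f x i * u i) ^ 2) μ := by
        rw [heq]; exact hIsum
      have hzero : ∫ x, (∑ i, gradient f x i * u i) ^ 2 ∂μ = 0 := by
        rw [heq, integral_finset_sum _ fun i _ => integrable_finset_sum _ fun j _ =>
          (hint i j).const_mul (u i * u j)]
        refine Finset.sum_eq_zero fun i _ => ?_
        rw [integral_finset_sum _ fun j _ => (hint i j).const_mul (u i * u j)]
        have h0 : ∑ j, C i j * u j = 0 := congrFun hCu i
        calc (∑ j, ∫ x, (u i * u j) * (gradient f x i * gradient f x j) ∂μ)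
            = ∑ j, (u i * u j) * C i j := by
              refine Finset.sum_congr rfl fun j _ => ?_
              rw [MeasureTheory.integral_const_mul, hC]
          _ = u i * ∑ j, C i j * u j := by
              rw [Finset.mul_sum]
              exact Finset.sum_congr rfl fun j _ => by ring
          _ = 0 := by rw [h0, mul_zero]
      have hae : (fun x => (∑ i, gradient f x i * u i) ^ 2) =ᵐ[μ] 0 := by
        rw [← integral_eq_zero_iff_of_nonneg (fun x => sq_nonneg _) hint']
        exact hzero
      filter_upwards [hae] with x hx
      exact pow_eq_zero_iff two_ne_zero |>.mp hx
    set b := Module.finBasis ℝ (LinearMap.ker C.mulVecLin) with hb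
    have hbk : ∀ k, C.mulVec (((b k) : (LinearMap.ker C.mulVecLin)) : Fin m → ℝ) = 0 := by
      intro k
      have h1 := (b k).2
      rw [LinearMap.mem_ker, Matrix.mulVecLin_apply] at h1
      exact h1
    have haeAll : ∀ᵐ x ∂μ, ∀ k,
        ∑ i, gradient f x i * (((b k) : (LinearMap.ker C.mulVecLin)) : Fin m → ℝ) i = 0 :=
      (ae_all_iff).2 fun k => claim _ (hbk k)
    filter_upwards [haeAll] with x hx
    apply aux_mem_range m C hsym
    intro u hu
    have humem : u ∈ LinearMap.ker C.mulVecLin := by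
      rw [LinearMap.mem_ker, Matrix.mulVecLin_apply]; exact hu
    have hspan : Submodule.span ℝ
        (Set.range ((LinearMap.ker C.mulVecLin).subtype ∘ b)) = LinearMap.ker C.mulVecLin := by
      rw [Set.range_comp, Submodule.span_image, b.span_eq, Submodule.map_subtype_top]
    rw [← hspan] at humem
    clear hu
    induction humem using Submodule.span_induction with
    | mem y hy =>
      obtain ⟨k, rfl⟩ := hy
      exact hx k
    | zero => simp
    | add a b' _ _ ha hb' =>
      simp only [Pi.add_apply, mul_add, Finset.sum_add_distrib, ha, hb', add_zero]
    | smul c a _ ha =>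
      have : ∑ i, gradient f x i * (c • a) i = c * ∑ i, gradient f x i * a i := by
        rw [Finset.mul_sum]
        exact Finset.sum_congr rfl fun i _ => by
          simp only [Pi.smul_apply, smul_eq_mul]; ring
      rw [this, ha, mul_zero]
  · -- pointwise ridge part
    intro x u hu
    set L : EuclideanSpace ℝ (Fin m) →ₗ[ℝ] EuclideanSpace ℝ (Fin n) :=
      Matrix.toEuclideanLin A.transpose with hL
    set Lc : EuclideanSpace ℝ (Fin m) →L[ℝ] EuclideanSpace ℝ (Fin n) :=
      LinearMap.toContinuousLinearMap L with hLc
    have hLapp : ∀ y : EuclideanSpace ℝ (Fin m),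
        Lc y = (WithLp.equiv 2 (Fin n → ℝ)).symm
          (A.transpose.mulVec (WithLp.equiv 2 (Fin m → ℝ) y)) := by
      intro y
      rw [hLc, LinearMap.coe_toContinuousLinearMap', hL, Matrix.toEuclideanLin_apply]
      rfl
    have hfe : f = fun y => g (Lc y) := by
      funext y
      rw [hf y, hLapp y]
      rfl
    have hfd : HasFDerivAt f ((fderiv ℝ g (Lc x)).comp Lc) x := by
      rw [hfe]
      exact ((hg.differentiable one_ne_zero) (Lc x)).hasFDerivAt.comp x Lc.hasFDerivAt
    have hgrad := hfd.differentiableAt.hasGradientAt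
    rw [hasGradientAt_iff_hasFDerivAt] at hgrad
    have hfderiv := hgrad.fderiv
    set u' : EuclideanSpace ℝ (Fin m) := (WithLp.equiv 2 (Fin m → ℝ)).symm u with hu'
    have key : (inner ℝ (gradient f x) u' : ℝ) = fderiv ℝ f x u' := by
      rw [hfderiv]
      rfl
    have h1 : (∑ i, gradient f x i * u i) = (inner ℝ (gradient f x) u' : ℝ) := by
      rw [PiLp.inner_apply]
      refine Finset.sum_congr rfl fun i _ => ?_
      simp only [RCLike.inner_apply, starRingEnd_apply, star_trivial]
      exact mul_comm _ _
    have hLu : Lc u' = 0 := by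
      rw [hLapp u']
      show (WithLp.equiv 2 (Fin n → ℝ)).symm (A.transpose.mulVec u) = 0
      rw [hu]
      rfl
    rw [h1, key, hfd.fderiv]
    rw [ContinuousLinearMap.comp_apply, hLu]
    simp
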